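/- Let A(u₁,u₂) be a homogeneous real-valued polynomial of degree m in (u₁,ū₁,u₂,ū₂), i.e. A(u₁,u₂) = Σ_{|α|+|β|=m, |α|>0, |β|>0} b_{α,β} u'^α ū'^β with at least one coefficient b_{α,β} ≠ 0 (where all appearing multi-indices satisfy |α|>0 and |β|>0). Then there exists h ∈ ℂ such that the one-variable polynomial z ↦ A(hz, z), viewed as a polynomial in z and z̄, has a nonzero mixed coefficient, i.e. ∂^m A(hz,z)/∂z^j ∂z̄^k (0) ≠ 0 for some j,k > 0 with j+k = m. -/
import Mathlib

open Finset

open Polynomial in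
private lemma evalR_zero {P : Polynomial ℂ} (h : ∀ x : ℝ, P.eval (x : ℂ) = 0) : P = 0 := by
  apply Polynomial.eq_zero_of_infinite_isRoot
  apply Set.Infinite.mono (s := Set.range ((↑) : ℝ → ℂ))
  · rintro _ ⟨x, rfl⟩; exact h x
  · exact Set.infinite_range_of_injective Complex.ofReal_injective

open Polynomial in
private lemma sum_pow_eq_zero {n : ℕ} {a : ℕ → ℂ}
    (h : ∀ z : ℂ, ∑ i ∈ range n, a i * z ^ i = 0) : ∀ i ∈ range n, a i = 0 := by
  have hP : (∑ i ∈ range n, C (a i) * X ^ i : Polynomial ℂ) = 0 := by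
    apply evalR_zero
    intro x
    simpa [Polynomial.eval_finset_sum] using h x
  intro i hi
  have := congrArg (fun p => Polynomial.coeff p i) hP
  simpa [Polynomial.finset_sum_coeff, Polynomial.coeff_C_mul, Polynomial.coeff_X_pow, hi]
    using this

private lemma sum_diag (m j : ℕ) (hj : j ≤ m) (F : ℕ × ℕ → ℂ) :
    ∑ α ∈ range (m+1) ×ˢ range (m+1), (if α.1 + α.2 = j then F α else 0)
      = ∑ p ∈ range (j+1), F (p, j - p) := by
  rw [← Finset.sum_filter]
  apply Finset.sum_bij' (i := fun α _ => α.1) (j := fun p _ => (p, j - p))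
  · intro α hα
    simp only [Finset.mem_filter, Finset.mem_product, Finset.mem_range] at hα
    simp only [Finset.mem_range]
    omega
  · intro p hp
    simp only [Finset.mem_range] at hp
    simp only [Finset.mem_filter, Finset.mem_product, Finset.mem_range]
    omega
  · intro α hα
    simp only [Finset.mem_filter, Finset.mem_product, Finset.mem_range] at hα
    ext <;> simp <;> omega
  · intro p hp
    rfl
  · intro α hα
    simp only [Finset.mem_filter, Finset.mem_product, Finset.mem_range] at hα
    congr 1
    ext <;> simp <;> omega

open Polynomial in
private lemma doubleslice {J K : ℕ} {g : ℕ → ℕ → ℂ}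
    (H : ∀ h : ℂ, ∑ p ∈ range J, ∑ q ∈ range K, g p q * h ^ p * (starRingEnd ℂ h) ^ q = 0) :
    ∀ p ∈ range J, ∀ q ∈ range K, g p q = 0 := by
  have step1 : ∀ (y : ℝ) (z : ℂ), ∑ p ∈ range J, ∑ q ∈ range K,
      g p q * (z + Complex.I * y) ^ p * (z - Complex.I * y) ^ q = 0 := by
    intro y z
    have hP : (∑ p ∈ range J, ∑ q ∈ range K,
        C (g p q) * (X + C (Complex.I * y)) ^ p * (X - C (Complex.I * y)) ^ q
        : Polynomial ℂ) = 0 := by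
      apply evalR_zero
      intro x
      have hx := H ((x : ℂ) + Complex.I * y)
      have hconj : (starRingEnd ℂ) ((x : ℂ) + Complex.I * y) = (x : ℂ) - Complex.I * y := by
        simp [Complex.ext_iff]
      rw [hconj] at hx
      simpa [Polynomial.eval_finset_sum] using hx
    have := congrArg (Polynomial.eval z) hP
    simpa [Polynomial.eval_finset_sum] using this
  have step2 : ∀ z w : ℂ, ∑ p ∈ range J, ∑ q ∈ range K, g p q * z ^ p * w ^ q = 0 := by
    intro z w
    have hP : (∑ p ∈ range J, ∑ q ∈ range K,
        C (g p q) * (C ((z + w) / 2) + C Complex.I * X) ^ p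
          * (C ((z + w) / 2) - C Complex.I * X) ^ q : Polynomial ℂ) = 0 := by
      apply evalR_zero
      intro y
      simpa [Polynomial.eval_finset_sum] using step1 y ((z + w) / 2)
    have hev := congrArg (Polynomial.eval ((z - w) / (2 * Complex.I))) hP
    have e1 : (z + w) / 2 + Complex.I * ((z - w) / (2 * Complex.I)) = z := by
      field_simp
      ring
    have e2 : (z + w) / 2 - Complex.I * ((z - w) / (2 * Complex.I)) = w := by
      field_simp
      ring
    simpa [Polynomial.eval_finset_sum, e1, e2] using hev
  intro p hp q hq
  have hcol : ∀ w : ℂ, ∑ q ∈ range K, g p q * w ^ q = 0 := by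
    intro w
    apply sum_pow_eq_zero (n := J) (a := fun p => ∑ q ∈ range K, g p q * w ^ q) _ p hp
    intro z
    rw [← step2 z w]
    rw [Finset.sum_congr rfl]
    intro p _
    rw [Finset.sum_mul]
    apply Finset.sum_congr rfl
    intro q _
    ring
  exact sum_pow_eq_zero (n := K) (a := fun q => g p q) hcol q hq

theorem stmt0 (m : ℕ) (b : (ℕ × ℕ) → (ℕ × ℕ) → ℂ)
    (hdeg : ∀ α β : ℕ × ℕ, b α β ≠ 0 →
      α.1 + α.2 + (β.1 + β.2) = m ∧ 0 < α.1 + α.2 ∧ 0 < β.1 + β.2)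
    (hne : ∃ α β : ℕ × ℕ, b α β ≠ 0) :
    ∃ h : ℂ, ∃ j k : ℕ, 0 < j ∧ 0 < k ∧ j + k = m ∧
      (∑ α ∈ range (m+1) ×ˢ range (m+1), ∑ β ∈ range (m+1) ×ˢ range (m+1),
        if α.1 + α.2 = j ∧ β.1 + β.2 = k
        then b α β * h ^ α.1 * (starRingEnd ℂ h) ^ β.1 else 0) ≠ 0 := by
  obtain ⟨α₀, β₀, hb⟩ := hne
  obtain ⟨hm, hj0, hk0⟩ := hdeg α₀ β₀ hb
  set j := α₀.1 + α₀.2 with hjdef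
  set k := β₀.1 + β₀.2 with hkdef
  by_contra hcon
  push_neg at hcon
  have hjm : j ≤ m := by omega
  have hkm : k ≤ m := by omega
  have key : ∀ h : ℂ, ∑ p ∈ range (j+1), ∑ q ∈ range (k+1),
      b (p, j - p) (q, k - q) * h ^ p * (starRingEnd ℂ h) ^ q = 0 := by
    intro h
    have h0 := hcon h j k hj0 hk0 hm
    rw [show (∑ α ∈ range (m+1) ×ˢ range (m+1), ∑ β ∈ range (m+1) ×ˢ range (m+1),
        if α.1 + α.2 = j ∧ β.1 + β.2 = k
        then b α β * h ^ α.1 * (starRingEnd ℂ h) ^ β.1 else 0)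
        = ∑ p ∈ range (j+1), ∑ q ∈ range (k+1),
            b (p, j - p) (q, k - q) * h ^ p * (starRingEnd ℂ h) ^ q from ?_] at h0
    · exact h0
    · rw [← sum_diag m j hjm (fun α => ∑ q ∈ range (k+1),
          b α (q, k - q) * h ^ α.1 * (starRingEnd ℂ h) ^ q)]
      apply Finset.sum_congr rfl
      intro α _
      by_cases hA : α.1 + α.2 = j
      · simp only [hA, true_and, if_true]
        rw [← sum_diag m k hkm (fun β => b α β * h ^ α.1 * (starRingEnd ℂ h) ^ β.1)]
      · simp [hA]
  have hz := doubleslice (g := fun p q => b (p, j - p) (q, k - q)) key α₀.1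
    (by simp only [Finset.mem_range]; omega) β₀.1 (by simp only [Finset.mem_range]; omega)
  apply hb
  have e1 : (α₀.1, j - α₀.1) = α₀ := by ext <;> simp <;> omega
  have e2 : (β₀.1, k - β₀.1) = β₀ := by ext <;> simp <;> omega
  simpa [e1, e2] using hz
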